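/- arXiv:2109.00519 — 10 statements merged into one kernel-verified Lean document; each statement's English description precedes it below -/
import Mathlib

section
/- Let R be a commutative ring, S a multiplicatively closed subset of R, and M an R-module with submodules K ≤ N ≤ M. Then N is an S-small submodule of M if and only if K is an S-small submodule of M and N/K is an S-small submodule of M/K. -/
variable {R : Type*} [CommRing R]

/-- `(0 :_M I)` : the elements of `M` annihilated by the ideal `I`. -/
def ann0 (R : Type*) [CommRing R] (M : Type*) [AddCommGroup M] [Module R M]
    (I : Ideal R) : Submodule R M :=
  Submodule.torsionBySet R M (I : Set R)

/-- `N` is an S-small submodule: `sM ≤ N + L` implies `tM ≤ L` for some `t ∈ S`. -/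
def SSmall (S : Set R) {M : Type*} [AddCommGroup M] [Module R M] (N : Submodule R M) : Prop :=
  ∀ (L : Submodule R M), ∀ s ∈ S, (∀ m : M, s • m ∈ N ⊔ L) → ∃ t ∈ S, ∀ m : M, t • m ∈ L

/-- `N` is an S-essential submodule: `N ⊓ L = 0` implies `sL = 0` for some `s ∈ S`. -/
def SEssential (S : Set R) {M : Type*} [AddCommGroup M] [Module R M] (N : Submodule R M) : Prop :=
  ∀ L : Submodule R M, N ⊓ L = ⊥ → ∃ s ∈ S, ∀ x ∈ L, s • x = (0 : M)

/-- `M` is an S-comultiplication module. -/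
def SComult (S : Set R) (M : Type*) [AddCommGroup M] [Module R M] : Prop :=
  ∀ N : Submodule R M, ∃ s ∈ S, ∃ I : Ideal R,
    (∀ x ∈ ann0 R M I, s • x ∈ N) ∧ N ≤ ann0 R M I

/-- `M` satisfies the S-double annihilator condition. -/
def SDAC (S : Set R) (M : Type*) [AddCommGroup M] [Module R M] : Prop :=
  ∀ I : Ideal R, ∃ s ∈ S, ∀ r ∈ (ann0 R M I).annihilator, s * r ∈ I

/-- `L` is an S-copure submodule: `s(L :_M I) ⊆ L + (0 :_M I)` for all ideals `I`. -/
def SCopure (S : Set R) {M : Type*} [AddCommGroup M] [Module R M] (L : Submodule R M) : Prop :=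
  ∃ s ∈ S, ∀ (I : Ideal R) (m : M), (∀ a ∈ I, a • m ∈ L) → s • m ∈ L ⊔ ann0 R M I

/-- `P` is a prime submodule of `M`. -/
def IsPrimeSubmodule {M : Type*} [AddCommGroup M] [Module R M] (P : Submodule R M) : Prop :=
  P ≠ ⊤ ∧ ∀ (a : R) (m : M), a • m ∈ P → a ∈ P.colon ⊤ ∨ m ∈ P

/-- `P` is an S-prime submodule of `M`. -/
def SPrime (S : Set R) {M : Type*} [AddCommGroup M] [Module R M] (P : Submodule R M) : Prop :=
  ((P.colon ⊤ : Set R) ∩ S = ∅) ∧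
    ∃ s ∈ S, ∀ (a : R) (m : M), a • m ∈ P → s * a ∈ P.colon ⊤ ∨ s • m ∈ P

/-- `N` is an S-quasi-copure submodule: every S-prime submodule containing `N` is S-copure. -/
def SQuasiCopure (S : Set R) {M : Type*} [AddCommGroup M] [Module R M] (N : Submodule R M) : Prop :=
  ∀ P : Submodule R M, SPrime S P → N ≤ P → SCopure S P

/-- `N` is a weak S-copure submodule: every prime submodule containing `N` is S-copure. -/
def WeakSCopure (S : Set R) {M : Type*} [AddCommGroup M] [Module R M] (N : Submodule R M) : Prop :=
  ∀ P : Submodule R M, IsPrimeSubmodule P → N ≤ P → SCopure S P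

variable {M : Type*} [AddCommGroup M] [Module R M]

theorem stmt_4 (S : Set R) (hS0 : (0:R) ∉ S) (hS1 : (1:R) ∈ S) (hSm : ∀ s ∈ S, ∀ t ∈ S, s * t ∈ S) (K N : Submodule R M) (hKN : K ≤ N) :
    SSmall S N ↔ SSmall S K ∧ SSmall S (N.map K.mkQ) := by
  constructor
  · intro hN
    refine ⟨?_, ?_⟩
    · intro L s hs h
      exact hN L s hs fun m => sup_le_sup_right hKN L (h m)
    · intro Lb s hs h
      set L := Lb.comap K.mkQ with hL
      have hmapL : L.map K.mkQ = Lb :=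
        Submodule.map_comap_eq_of_surjective (Submodule.mkQ_surjective K) Lb
      have key : ∀ m : M, s • m ∈ N ⊔ L := by
        intro m
        have h1 : K.mkQ (s • m) ∈ N.map K.mkQ ⊔ Lb := by
          have := h (K.mkQ m)
          rwa [← map_smul] at this
        have h2 : N.map K.mkQ ⊔ Lb = (N ⊔ L).map K.mkQ := by
          rw [Submodule.map_sup, hmapL]
        rw [h2] at h1
        have h3 : s • m ∈ Submodule.comap K.mkQ (Submodule.map K.mkQ (N ⊔ L)) := h1
        rw [Submodule.comap_map_eq, Submodule.ker_mkQ] at h3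
        have : N ⊔ L ⊔ K = N ⊔ L := by
          rw [sup_comm (N ⊔ L) K]
          exact sup_eq_right.mpr (le_sup_of_le_left hKN)
        rwa [this] at h3
      obtain ⟨t, ht, htL⟩ := hN L s hs key
      refine ⟨t, ht, ?_⟩
      intro mb
      obtain ⟨m, rfl⟩ := Submodule.mkQ_surjective K mb
      rw [← map_smul]
      rw [← hmapL]
      exact Submodule.mem_map_of_mem (htL m)
  · rintro ⟨hK, hNK⟩ L s hs h
    have key : ∀ mb : M ⧸ K, s • mb ∈ N.map K.mkQ ⊔ L.map K.mkQ := by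
      intro mb
      obtain ⟨m, rfl⟩ := Submodule.mkQ_surjective K mb
      rw [← map_smul, ← Submodule.map_sup]
      exact Submodule.mem_map_of_mem (h m)
    obtain ⟨t, ht, htL⟩ := hNK (L.map K.mkQ) s hs key
    have key2 : ∀ m : M, t • m ∈ K ⊔ L := by
      intro m
      have h1 : K.mkQ (t • m) ∈ L.map K.mkQ := by
        have := htL (K.mkQ m); rwa [← map_smul] at this
      have h2 : t • m ∈ (L.map K.mkQ).comap K.mkQ := h1
      rw [Submodule.comap_map_eq, Submodule.ker_mkQ, sup_comm] at h2
      exact h2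
    exact hK L t ht key2
end

section
/- Let R be a commutative ring, S a multiplicatively closed subset of R, and M an R-module with submodules K ≤ N ≤ M. If N is an S-small submodule of M, then N/K is an S-small submodule of M/K. -/
variable {R : Type*} [CommRing R]

variable {M : Type*} [AddCommGroup M] [Module R M]

theorem stmt_6 (S : Set R) (hS0 : (0:R) ∉ S) (hS1 : (1:R) ∈ S) (hSm : ∀ s ∈ S, ∀ t ∈ S, s * t ∈ S) (K N : Submodule R M) (hKN : K ≤ N)
    (h : SSmall S N) : SSmall S (N.map K.mkQ) := by
  intro L' s hs hsm
  obtain ⟨t, ht, htL⟩ := h (L'.comap K.mkQ) s hs (by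
    intro m
    have := hsm (K.mkQ m)
    rw [← map_smul] at this
    obtain ⟨x, hx, y, hy, hxy⟩ := Submodule.mem_sup.mp this
    obtain ⟨n, hn, rfl⟩ := hx
    refine Submodule.mem_sup.mpr ⟨n, hn, s • m - n, ?_, by abel⟩
    simp only [Submodule.mem_comap, map_sub, hxy.symm]
    simpa using hy)
  refine ⟨t, ht, fun q => ?_⟩
  obtain ⟨m, rfl⟩ := K.mkQ_surjective q
  rw [← map_smul]
  exact htL m
end

section
/- Let R be a commutative ring, S a multiplicatively closed subset of R, and M a faithful S-strong comultiplication R-module. If N is an S-small submodule of M, then there exist an ideal I of R which is S-essential in R and an element t ∈ S such that t·(0 :_M I) ≤ N ≤ (0 :_M I). -/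
variable {R : Type*} [CommRing R]

variable {M : Type*} [AddCommGroup M] [Module R M]

theorem stmt_7 (S : Set R) (hS0 : (0:R) ∉ S) (hS1 : (1:R) ∈ S) (hSm : ∀ s ∈ S, ∀ t ∈ S, s * t ∈ S)
    (hfaith : (⊤ : Submodule R M).annihilator = ⊥)
    (hcom : SComult S M) (hdac : SDAC S M)
    (N : Submodule R M) (h : SSmall S N) :
    ∃ I : Ideal R, SEssential S I ∧
      ∃ t ∈ S, (∀ x ∈ ann0 R M I, t • x ∈ N) ∧ N ≤ ann0 R M I := by
  obtain ⟨s₀, hs₀, I, hI1, hI2⟩ := hcom N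
  refine ⟨I, ?_, s₀, hs₀, hI1, hI2⟩
  intro J hIJ
  obtain ⟨s, hs, L, hL1, hL2⟩ := hcom (ann0 R M I ⊔ ann0 R M J)
  obtain ⟨sI, hsI, hdI⟩ := hdac I
  obtain ⟨sJ, hsJ, hdJ⟩ := hdac J
  have hLann : ∀ a ∈ L, a ∈ (ann0 R M L).annihilator := by
    intro a ha
    rw [Submodule.mem_annihilator]
    intro x hx
    exact (Submodule.mem_torsionBySet_iff _ _).1 hx ⟨a, ha⟩
  have hLI : ∀ a ∈ L, sI * a ∈ I := by
    intro a ha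
    apply hdI
    rw [Submodule.mem_annihilator]
    intro x hx
    exact (Submodule.mem_annihilator.1 (hLann a ha)) x
      (hL2 (le_sup_left (a := ann0 R M I) hx))
  have hLJ : ∀ a ∈ L, sJ * a ∈ J := by
    intro a ha
    apply hdJ
    rw [Submodule.mem_annihilator]
    intro x hx
    exact (Submodule.mem_annihilator.1 (hLann a ha)) x
      (hL2 (le_sup_right (b := ann0 R M J) hx))
  have hL0 : ∀ a ∈ L, sI * sJ * a = 0 := by
    intro a ha
    have h1 : sI * sJ * a ∈ I := by
      have h' : sJ * (sI * a) ∈ I := Ideal.mul_mem_left _ _ (hLI a ha)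
      rwa [show sJ * (sI * a) = sI * sJ * a by ring] at h'
    have h2 : sI * sJ * a ∈ J := by
      have h' : sI * (sJ * a) ∈ J := Ideal.mul_mem_left _ _ (hLJ a ha)
      rwa [show sI * (sJ * a) = sI * sJ * a by ring] at h'
    have hm : sI * sJ * a ∈ I ⊓ J := ⟨h1, h2⟩
    rwa [hIJ, Submodule.mem_bot] at hm
  have hmem : ∀ m : M, (sI * sJ) • m ∈ ann0 R M L := by
    intro m
    refine (Submodule.mem_torsionBySet_iff _ _).2 ?_
    rintro ⟨a, ha⟩
    show a • (sI * sJ) • m = 0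
    rw [smul_smul, show a * (sI * sJ) = sI * sJ * a by ring, hL0 a ha, zero_smul]
  have hsup : ∀ m : M, (s₀ * (s * (sI * sJ))) • m ∈ N ⊔ ann0 R M J := by
    intro m
    have h1 : s • (sI * sJ) • m ∈ ann0 R M I ⊔ ann0 R M J := hL1 _ (hmem m)
    obtain ⟨x, hx, y, hy, hxy⟩ := Submodule.mem_sup.1 h1
    have heq : (s₀ * (s * (sI * sJ))) • m = s₀ • x + s₀ • y := by
      rw [← smul_add, hxy, mul_smul, mul_smul]
    rw [heq]
    exact Submodule.add_mem _ (Submodule.mem_sup_left (hI1 x hx))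
      (Submodule.mem_sup_right (Submodule.smul_mem _ _ hy))
  obtain ⟨t, ht, htm⟩ := h (ann0 R M J) (s₀ * (s * (sI * sJ)))
    (hSm _ hs₀ _ (hSm _ hs _ (hSm _ hsI _ hsJ))) hsup
  refine ⟨t, ht, fun a ha => ?_⟩
  have hta : t * a ∈ (⊤ : Submodule R M).annihilator := by
    rw [Submodule.mem_annihilator]
    intro m _
    rw [show (t * a) • m = a • t • m by rw [smul_smul, mul_comm]]
    exact (Submodule.mem_torsionBySet_iff _ _).1 (htm m) ⟨a, ha⟩
  rw [hfaith, Submodule.mem_bot] at hta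
  simpa [smul_eq_mul] using hta
end

section
/- Let R be a commutative ring, M a faithful strong comultiplication R-module that is prime. If N is a submodule of M with (0 :_M I) = N for some essential ideal I of R, then N is a small submodule of M. (This is the S = {1} case of the converse direction.) -/
variable {R : Type*} [CommRing R]

variable {M : Type*} [AddCommGroup M] [Module R M]

theorem stmt_8
    (hfaith : (⊤ : Submodule R M).annihilator = ⊥)
    (hprime : ∀ A : Submodule R M, A ≠ ⊥ → A.annihilator = (⊤ : Submodule R M).annihilator)
    (hcom : ∀ N : Submodule R M, ∃ I : Ideal R, N = ann0 R M I)
    (hdac : ∀ I : Ideal R, (ann0 R M I).annihilator ≤ I)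
    (hsum : ∀ I J : Ideal R, ann0 R M (I ⊓ J) = ann0 R M I ⊔ ann0 R M J)
    (I : Ideal R) (hIess : ∀ J : Ideal R, I ⊓ J = ⊥ → J = ⊥)
    (N : Submodule R M) (hN : N = ann0 R M I) :
    ∀ L : Submodule R M, N ⊔ L = ⊤ → L = ⊤ := by
  intro L hL
  obtain ⟨J, hJ⟩ := hcom L
  have htop : ann0 R M (I ⊓ J) = ⊤ := by
    rw [hsum, ← hN, ← hJ, hL]
  have hIJ : I ⊓ J = ⊥ := by
    ext r
    simp only [Ideal.mem_bot, Submodule.mem_bot]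
    constructor
    · intro hr
      have hr' : r ∈ (⊤ : Submodule R M).annihilator := by
        rw [Submodule.mem_annihilator]
        intro m _
        have hm : m ∈ ann0 R M (I ⊓ J) := htop ▸ Submodule.mem_top
        exact (Submodule.mem_torsionBySet_iff _ _).mp hm ⟨r, hr⟩
      rwa [hfaith, Ideal.mem_bot] at hr'
    · rintro rfl; exact Submodule.zero_mem _
  rw [hJ, hIess J hIJ]
  ext m
  simp only [Submodule.mem_top, iff_true]
  refine (Submodule.mem_torsionBySet_iff _ _).mpr ?_
  rintro ⟨x, hx⟩
  have hx0 : x = 0 := by simpa using hx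
  simp [hx0]
end

section
/- Let R be a commutative ring, S a multiplicatively closed subset of R, and M a torsion-free S-strong comultiplication R-module. If N is an S-essential submodule of M, then there exist an S-small ideal I of R and s ∈ S such that s(0 :_M I) ≤ N ≤ (0 :_M I). -/
variable {R : Type*} [CommRing R]

variable {M : Type*} [AddCommGroup M] [Module R M]

theorem stmt_9 (S : Set R) (hS0 : (0:R) ∉ S) (hS1 : (1:R) ∈ S) (hSm : ∀ s ∈ S, ∀ t ∈ S, s * t ∈ S)
    (htf : ∀ (r : R) (m : M), r • m = 0 → r = 0 ∨ m = 0)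
    (hcom : SComult S M) (hdac : SDAC S M)
    (N : Submodule R M) (h : SEssential S N) :
    ∃ I : Ideal R, SSmall S I ∧
      ∃ s ∈ S, (∀ x ∈ ann0 R M I, s • x ∈ N) ∧ N ≤ ann0 R M I := by
  obtain ⟨s, hs, I, hI1, hI2⟩ := hcom N
  refine ⟨I, ?_, s, hs, hI1, hI2⟩
  intro J s' hs' hsup
  have hbot : N ⊓ ann0 R M J = ⊥ := by
    rw [eq_bot_iff]
    rintro m ⟨hmN, hmJ⟩
    have hmI : m ∈ ann0 R M I := hI2 hmN
    have hsm := hsup 1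
    rw [smul_eq_mul, mul_one] at hsm
    obtain ⟨i, hi, j, hj, hij⟩ := Submodule.mem_sup.mp hsm
    have h1 : i • m = 0 := (Submodule.mem_torsionBySet_iff _ _).mp hmI ⟨i, hi⟩
    have h2 : j • m = 0 := (Submodule.mem_torsionBySet_iff _ _).mp hmJ ⟨j, hj⟩
    have hz : s' • m = 0 := by rw [← hij, add_smul, h1, h2, add_zero]
    rcases htf s' m hz with h' | h'
    · exact absurd (h' ▸ hs') hS0
    · simpa using h'
  obtain ⟨u, hu, hu0⟩ := h (ann0 R M J) hbot
  obtain ⟨v, hv, hvJ⟩ := hdac J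
  refine ⟨v * u, hSm v hv u hu, fun m => ?_⟩
  have hann : u ∈ (ann0 R M J).annihilator := Submodule.mem_annihilator.mpr hu0
  have hvu : v * u ∈ J := hvJ u hann
  simpa [smul_eq_mul] using Ideal.mul_mem_right m J hvu
end

section
/- Let R be a commutative ring, S a multiplicatively closed subset of R, and M a torsion-free S-strong comultiplication R-module. If N is a submodule of M such that s(0 :_M I) ≤ N ≤ (0 :_M I) for some S-small ideal I of R and some s ∈ S, then N is an S-essential submodule of M. -/
variable {R : Type*} [CommRing R]

variable {M : Type*} [AddCommGroup M] [Module R M]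

theorem stmt_10 (S : Set R) (hS0 : (0:R) ∉ S) (hS1 : (1:R) ∈ S) (hSm : ∀ s ∈ S, ∀ t ∈ S, s * t ∈ S)
    (htf : ∀ (r : R) (m : M), r • m = 0 → r = 0 ∨ m = 0)
    (hcom : SComult S M) (hdac : SDAC S M)
    (N : Submodule R M) (I : Ideal R) (hI : SSmall S I)
    (s : R) (hs : s ∈ S) (h1 : ∀ x ∈ ann0 R M I, s • x ∈ N) (h2 : N ≤ ann0 R M I) :
    SEssential S N := by
  intro L hNL
  obtain ⟨t, ht, J, hJ1, hJ2⟩ := hcom L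
  have hzero : ∀ x ∈ ann0 R M (I ⊔ J), x = 0 := by
    intro x hx
    have hxI : x ∈ ann0 R M I := by
      rw [ann0, Submodule.mem_torsionBySet_iff] at hx ⊢
      intro a; exact hx ⟨a.1, Ideal.mem_sup_left a.2⟩
    have hxJ : x ∈ ann0 R M J := by
      rw [ann0, Submodule.mem_torsionBySet_iff] at hx ⊢
      intro a; exact hx ⟨a.1, Ideal.mem_sup_right a.2⟩
    have hN : (s * t) • x ∈ N := by
      rw [mul_comm, mul_smul]; exact N.smul_mem t (h1 x hxI)
    have hL : (s * t) • x ∈ L := by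
      rw [mul_smul]; exact L.smul_mem s (hJ1 x hxJ)
    have hb : (s * t) • x ∈ N ⊓ L := ⟨hN, hL⟩
    rw [hNL, Submodule.mem_bot] at hb
    rcases htf _ _ hb with h | h
    · exact absurd (h ▸ hSm s hs t ht) hS0
    · exact h
  obtain ⟨u, hu, hud⟩ := hdac (I ⊔ J)
  have hu' : ∀ m : R, u • m ∈ I ⊔ J := by
    intro m
    have hm : m ∈ (ann0 R M (I ⊔ J)).annihilator := by
      rw [Submodule.mem_annihilator]
      intro x hx; rw [hzero x hx, smul_zero]
    simpa [smul_eq_mul] using hud m hm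
  obtain ⟨v, hv, hvJ⟩ := hI J u hu hu'
  refine ⟨v, hv, ?_⟩
  intro x hx
  have hvmem : v ∈ J := by simpa using hvJ 1
  have hxJ : x ∈ ann0 R M J := hJ2 hx
  rw [ann0, Submodule.mem_torsionBySet_iff] at hxJ
  exact hxJ ⟨v, hvmem⟩
end

section
/- Let R be a commutative ring, S a multiplicatively closed subset of R, and M a torsion-free S-strong comultiplication R-module. Then the S-socle of M is contained in (0 :_M Rad^S(R)), where Soc^S(M) is the intersection of all S-essential submodules of M and Rad^S(R) is the sum of all S-small ideals of R. -/
variable {R : Type*} [CommRing R]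

variable {M : Type*} [AddCommGroup M] [Module R M]

theorem stmt_11 (S : Set R) (hS0 : (0:R) ∉ S) (hS1 : (1:R) ∈ S) (hSm : ∀ s ∈ S, ∀ t ∈ S, s * t ∈ S)
    (htf : ∀ (r : R) (m : M), r • m = 0 → r = 0 ∨ m = 0)
    (hcom : SComult S M) (hdac : SDAC S M) :
    sInf {N : Submodule R M | SEssential S N} ≤
      ann0 R M (sSup {I : Ideal R | SSmall S I}) := by
  -- Key lemma: for each S-small ideal I, (0 :_M I) is S-essential.
  have key : ∀ I : Ideal R, SSmall S I → SEssential S (ann0 R M I) := by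
    intro I hI L hL
    obtain ⟨s, hs, J, h1, h2⟩ := hcom L
    have hsann : s ∈ (ann0 R M (I ⊔ J)).annihilator := by
      rw [Submodule.mem_annihilator]
      intro n hn
      have hnI : n ∈ ann0 R M I := by
        rw [ann0, Submodule.mem_torsionBySet_iff] at hn ⊢
        intro a; exact hn ⟨a, Ideal.mem_sup_left a.2⟩
      have hnJ : n ∈ ann0 R M J := by
        rw [ann0, Submodule.mem_torsionBySet_iff] at hn ⊢
        intro a; exact hn ⟨a, Ideal.mem_sup_right a.2⟩
      have hmem : s • n ∈ ann0 R M I ⊓ L :=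
        ⟨Submodule.smul_mem _ s hnI, h1 n hnJ⟩
      rw [hL] at hmem
      exact hmem
    obtain ⟨t, ht, hdac'⟩ := hdac (I ⊔ J)
    have hts : t * s ∈ I ⊔ J := hdac' s hsann
    obtain ⟨u, hu, hum⟩ := hI J (t * s) (hSm t ht s hs)
      (fun m => by simpa [smul_eq_mul] using Ideal.mul_mem_right m _ hts)
    refine ⟨u, hu, fun x hx => ?_⟩
    have huJ : u ∈ J := by simpa [smul_eq_mul] using hum 1
    have hxJ := h2 hx
    rw [ann0, Submodule.mem_torsionBySet_iff] at hxJ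
    exact hxJ ⟨u, huJ⟩
  intro x hx
  rw [ann0, Submodule.mem_torsionBySet_iff]
  rintro ⟨a, ha⟩
  show a • x = 0
  rw [← Submodule.mem_annihilator_span_singleton]
  have hsup : sSup {I : Ideal R | SSmall S I} ≤ (Submodule.span R {x}).annihilator := by
    refine sSup_le fun I hI b hb => ?_
    rw [Submodule.mem_annihilator_span_singleton]
    have hxI : x ∈ ann0 R M I := SetLike.le_def.mp (sInf_le (show ann0 R M I ∈ {N : Submodule R M | SEssential S N} from key I hI)) hx
    rw [ann0, Submodule.mem_torsionBySet_iff] at hxI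
    exact hxI ⟨b, hb⟩
  exact hsup ha
end

section
/- Let R be a commutative ring, S a multiplicatively closed subset of R, and M a distributive R-module. If N and K are S-copure submodules of M, then N ∩ K is an S-copure submodule of M. -/
variable {R : Type*} [CommRing R]

variable {M : Type*} [AddCommGroup M] [Module R M]

theorem stmt_14 (S : Set R) (hS0 : (0:R) ∉ S) (hS1 : (1:R) ∈ S) (hSm : ∀ s ∈ S, ∀ t ∈ S, s * t ∈ S)
    (hdist : ∀ A B C : Submodule R M, A ⊓ (B ⊔ C) = A ⊓ B ⊔ A ⊓ C)
    (N K : Submodule R M) (hN : SCopure S N) (hK : SCopure S K) :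
    SCopure S (N ⊓ K) := by
  obtain ⟨s, hs, hNs⟩ := hN
  obtain ⟨t, ht, hKt⟩ := hK
  refine ⟨s * t, hSm s hs t ht, fun I m hm => ?_⟩
  set A := ann0 R M I
  have h1 : (s * t) • m ∈ N ⊔ A := by
    have := (N ⊔ A).smul_mem t (hNs I m (fun a ha => (hm a ha).1))
    simpa [smul_smul, mul_comm] using this
  have h2 : (s * t) • m ∈ K ⊔ A := by
    have := (K ⊔ A).smul_mem s (hKt I m (fun a ha => (hm a ha).2))
    simpa [smul_smul] using this
  have hle : (N ⊔ A) ⊓ (K ⊔ A) ≤ (N ⊓ K) ⊔ A := by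
    rw [hdist]
    apply sup_le
    · rw [inf_comm, hdist]
      apply sup_le
      · exact le_sup_of_le_left (by rw [inf_comm])
      · exact le_sup_of_le_right inf_le_right
    · exact le_sup_of_le_right inf_le_right
  exact hle ⟨h1, h2⟩
end

section
/- Let R be a commutative ring and S a multiplicatively closed subset of R with saturation S* = {x ∈ R : x/1 is a unit in S⁻¹R}. For any R-module M, every S-quasi-copure submodule of M is an S*-quasi-copure submodule of M. -/
variable {R : Type*} [CommRing R]

variable {M : Type*} [AddCommGroup M] [Module R M]

lemma sat_exists_mul_mem (S : Submonoid R) {s : R}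
    (hs : IsUnit (algebraMap R (Localization S) s)) : ∃ r : R, s * r ∈ S := by
  obtain ⟨u, hu⟩ := hs
  obtain ⟨⟨a, t⟩, ha⟩ := IsLocalization.surj S ((u⁻¹ : (Localization S)ˣ) : Localization S)
  have h1 : algebraMap R (Localization S) (s * a) = algebraMap R (Localization S) t := by
    rw [map_mul, ← ha, ← mul_assoc, ← hu, Units.mul_inv, one_mul]
  obtain ⟨c, hc⟩ := IsLocalization.exists_of_eq (M := S) h1
  exact ⟨c * a, by have : s * ((c:R) * a) = (c:R) * (s * a) := by ring
                   rw [this, hc]; exact S.mul_mem c.2 t.2⟩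

theorem stmt_17 (S : Submonoid R) (hS0 : (0:R) ∉ (S : Set R))
    (N : Submodule R M) (hN : SQuasiCopure (S : Set R) N) :
    SQuasiCopure {x : R | IsUnit (algebraMap R (Localization S) x)} N := by
  intro P hP hNP
  -- P is S*-prime; show it is S-prime
  obtain ⟨hdisj, s, hsS, hsp⟩ := hP
  obtain ⟨r, hr⟩ := sat_exists_mul_mem S hsS
  have hSsub : (S : Set R) ⊆ {x : R | IsUnit (algebraMap R (Localization S) x)} := by
    intro x hx
    exact IsLocalization.map_units (Localization S) (⟨x, hx⟩ : S)
  have hPS : SPrime (S : Set R) P := by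
    refine ⟨?_, s * r, hr, ?_⟩
    · apply Set.eq_empty_of_subset_empty
      intro x hx
      rw [← hdisj]
      exact ⟨hx.1, hSsub hx.2⟩
    · intro a m ham
      rcases hsp a m ham with h | h
      · left
        have : s * r * a = r * (s * a) := by ring
        rw [this]
        exact Ideal.mul_mem_left _ r h
      · right
        have : (s * r) • m = r • (s • m) := by rw [mul_comm, mul_smul]
        rw [this]
        exact P.smul_mem r h
  obtain ⟨t, htS, ht⟩ := hN P hPS hNP
  exact ⟨t, hSsub htS, ht⟩
end

section
/- Let R be a commutative ring, S a multiplicatively closed subset of R, and M an R-module. If N is a weak S-copure submodule of M and K is a submodule with N ⊆ K, then K/N is a weak S-copure submodule of M/N. -/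
variable {R : Type*} [CommRing R]

variable {M : Type*} [AddCommGroup M] [Module R M]

theorem stmt_19 (S : Set R) (hS0 : (0:R) ∉ S) (hS1 : (1:R) ∈ S) (hSm : ∀ s ∈ S, ∀ t ∈ S, s * t ∈ S) (N K : Submodule R M) (hNK : N ≤ K)
    (h : WeakSCopure S N) : WeakSCopure S (K.map N.mkQ) := by
  intro P hP _hKP
  set Q : Submodule R M := P.comap N.mkQ with hQ
  have hNQ : N ≤ Q := by
    intro n hn
    simp only [hQ, Submodule.mem_comap]
    have : N.mkQ n = 0 := (Submodule.Quotient.mk_eq_zero N).2 hn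
    rw [this]; exact P.zero_mem
  have hQprime : IsPrimeSubmodule Q := by
    constructor
    · intro htop
      apply hP.1
      rw [Submodule.eq_top_iff']
      intro x
      obtain ⟨m, rfl⟩ := N.mkQ_surjective x
      have : m ∈ Q := htop ▸ Submodule.mem_top
      exact this
    · intro a m ham
      rcases hP.2 a (N.mkQ m) ham with hc | hm
      · left
        rw [Submodule.mem_colon] at hc ⊢
        intro m' _
        exact hc (N.mkQ m') (Set.mem_univ _)
      · right; exact hm
  obtain ⟨s, hs, hcop⟩ := h Q hQprime hNQ
  refine ⟨s, hs, ?_⟩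
  intro I x hx
  obtain ⟨m, rfl⟩ := N.mkQ_surjective x
  have hm : ∀ a ∈ I, a • m ∈ Q := by
    intro a ha
    have : a • N.mkQ m ∈ P := hx a ha
    simpa [hQ, Submodule.mem_comap] using this
  have := hcop I m hm
  rw [Submodule.mem_sup] at this
  obtain ⟨q, hq, t, ht, hqt⟩ := this
  rw [Submodule.mem_sup]
  refine ⟨N.mkQ q, hq, N.mkQ t, ?_, by rw [← map_smul, ← hqt, map_add]⟩
  rw [ann0, Submodule.mem_torsionBySet_iff] at ht ⊢
  intro a
  have := ht a
  rw [← map_smul, this, map_zero]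
end
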